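/- Let T be a tree with a set M of marked vertices, and let k, r be positive integers. If |M| ≥ 2kr, then T contains k pairwise edge-disjoint subtrees T₁, …, T_k such that each T_i contains at least r marked vertices. -/

import Mathlib

open SimpleGraph

section Helpers

variable {V : Type} {T : SimpleGraph V}

lemma induce_connected_of_step (T : SimpleGraph V) (ρ : V) (S : Set V) (hρ : ρ ∈ S)
    (hstep : ∀ w ∈ S, w ≠ ρ → ∃ u ∈ S, T.Adj u w ∧ T.dist ρ u < T.dist ρ w) :
    (T.induce S).Connected := by
  rw [connected_iff_exists_forall_reachable]
  refine ⟨⟨ρ, hρ⟩, ?_⟩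
  have key : ∀ n : ℕ, ∀ v : V, ∀ hv : v ∈ S, T.dist ρ v ≤ n →
      (T.induce S).Reachable ⟨ρ, hρ⟩ ⟨v, hv⟩ := by
    intro n
    induction n with
    | zero =>
      intro v hv h0
      rcases eq_or_ne v ρ with rfl | hne
      · exact Reachable.refl _
      · obtain ⟨u, _, _, hlt⟩ := hstep v hv hne
        omega
    | succ n ih =>
      intro v hv hle
      rcases eq_or_ne v ρ with rfl | hne
      · exact Reachable.refl _
      · obtain ⟨u, hu, hadj, hlt⟩ := hstep v hv hne
        have hr : (T.induce S).Reachable ⟨ρ, hρ⟩ ⟨u, hu⟩ := ih u hu (by omega)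
        refine hr.trans (Adj.reachable ?_)
        exact hadj
  rintro ⟨v, hv⟩
  exact key (T.dist ρ v) v hv le_rfl

lemma subgraph_map_connected {W : Type} {T' : SimpleGraph W} (f : T →g T')
    {H : T.Subgraph} (h : H.Connected) : (H.map f).Connected := by
  rw [SimpleGraph.Subgraph.connected_iff'] at h ⊢
  let φ : H.coe →g (H.map f).coe :=
    { toFun := fun x => ⟨f x.1, ⟨x.1, x.2, rfl⟩⟩
      map_rel' := by
        rintro ⟨a, ha⟩ ⟨b, hb⟩ hab
        exact ⟨a, b, hab, rfl, rfl⟩ }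
  have hsurj : Function.Surjective φ := by
    rintro ⟨y, ⟨x, hx, rfl⟩⟩
    exact ⟨⟨x, hx⟩, rfl⟩
  exact SimpleGraph.Connected.map φ hsurj h

/-- `w` lies below `u` in the tree rooted at `ρ` -/
def below (T : SimpleGraph V) (ρ u : V) : Set V :=
  {w | T.dist ρ w = T.dist ρ u + T.dist u w}

lemma adj_dist_le {u w : V} (h : T.Adj u w) : T.dist u w ≤ 1 := by
  simpa using T.dist_le h.toWalk

lemma exists_adj_dist (hc : T.Connected) {a b : V} (h : b ≠ a) :
    ∃ u, T.Adj u b ∧ T.dist a u + 1 = T.dist a b := by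
  obtain ⟨p, hp⟩ := (hc b a).exists_walk_length_eq_dist
  cases p with
  | nil => exact absurd rfl h
  | @cons _ u _ hadj q =>
    refine ⟨u, hadj.symm, ?_⟩
    have h1 : T.dist a u ≤ q.length := by
      have := T.dist_le q.reverse
      simpa using this
    have h2 : T.dist a b ≤ T.dist a u + T.dist u b := hc.dist_triangle
    have h3 : T.dist u b ≤ 1 := adj_dist_le hadj.symm
    have h4 : q.length + 1 = T.dist a b := by
      have := hp
      simp only [SimpleGraph.Walk.length_cons] at this
      rw [T.dist_comm] at this
      omega
    omega

set_option linter.unusedSectionVars false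

variable (hc : T.Connected)
include hc

lemma below_root (ρ w : V) : w ∈ below T ρ ρ := by
  simp [below, SimpleGraph.dist_self]

lemma below_child_exists {ρ v w : V} (hw : w ∈ below T ρ v) (hne : w ≠ v) :
    ∃ c, T.Adj v c ∧ T.dist ρ c = T.dist ρ v + 1 ∧ w ∈ below T ρ c ∧
      T.dist c w + 1 = T.dist v w := by
  obtain ⟨c, hadj, hd⟩ := exists_adj_dist hc (a := w) (b := v) (Ne.symm hne)
  rw [show T.dist w c = T.dist c w from T.dist_comm,
    show T.dist w v = T.dist v w from T.dist_comm] at hd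
  have h1 : T.dist ρ c ≤ T.dist ρ v + 1 := by
    have := hc.dist_triangle (u := ρ) (v := v) (w := c)
    have := adj_dist_le (w := c) hadj.symm
    omega
  have h2 : T.dist ρ v + 1 ≤ T.dist ρ c := by
    by_contra hcon
    have ht1 : T.dist ρ w ≤ T.dist ρ c + T.dist c w := hc.dist_triangle
    have hbel : T.dist ρ w = T.dist ρ v + T.dist v w := hw
    omega
  refine ⟨c, hadj.symm, by omega, ?_, hd⟩
  have ht1 : T.dist ρ w ≤ T.dist ρ c + T.dist c w := hc.dist_triangle
  have hbel : T.dist ρ w = T.dist ρ v + T.dist v w := hw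
  show T.dist ρ w = T.dist ρ c + T.dist c w
  omega

lemma below_descend {ρ c w : V} (hw : w ∈ below T ρ c) (hne : w ≠ c) :
    ∃ u, T.Adj u w ∧ u ∈ below T ρ c ∧ T.dist c u + 1 = T.dist c w := by
  obtain ⟨u, hadj, hd⟩ := exists_adj_dist hc (a := c) (b := w) hne
  refine ⟨u, hadj, ?_, hd⟩
  have ht1 : T.dist ρ u ≤ T.dist ρ c + T.dist c u := hc.dist_triangle
  have ht2 : T.dist ρ w ≤ T.dist ρ u + 1 := by
    have := hc.dist_triangle (u := ρ) (v := u) (w := w)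
    have := adj_dist_le hadj
    omega
  have hbel : T.dist ρ w = T.dist ρ c + T.dist c w := hw
  show T.dist ρ u = T.dist ρ c + T.dist c u
  omega

lemma below_child_dist {ρ v c w : V} (hadj : T.Adj v c)
    (hdc : T.dist ρ c = T.dist ρ v + 1) (hw : w ∈ below T ρ c) :
    T.dist v w = T.dist c w + 1 := by
  have h1 : T.dist v w ≤ 1 + T.dist c w := by
    have := hc.dist_triangle (u := v) (v := c) (w := w)
    have := adj_dist_le hadj
    omega
  have hbel : T.dist ρ w = T.dist ρ c + T.dist c w := hw
  have h2 : T.dist ρ w ≤ T.dist ρ v + T.dist v w := hc.dist_triangle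
  omega

lemma below_up {ρ c u w : V} (hadj : T.Adj u w)
    (hd : T.dist ρ u + 1 = T.dist ρ w) (hu : u ∈ below T ρ c) :
    w ∈ below T ρ c := by
  have hbel : T.dist ρ u = T.dist ρ c + T.dist c u := hu
  have h1 : T.dist c w ≤ T.dist c u + 1 := by
    have := hc.dist_triangle (u := c) (v := u) (w := w)
    have := adj_dist_le hadj
    omega
  have h2 : T.dist ρ w ≤ T.dist ρ c + T.dist c w := hc.dist_triangle
  show T.dist ρ w = T.dist ρ c + T.dist c w
  omega

end Helpers

lemma greedy_list {V : Type} (P : V → Prop) (A : List V → Finset V) (r : ℕ) (hr : 0 < r)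
    (h0 : (A []).card ≤ 1)
    (hstep : ∀ c cs, P c → (A (c :: cs)).card ≤ (A cs).card + (r - 1)) :
    ∀ L : List V, (∀ x ∈ L, P x) → r ≤ (A L).card →
      ∃ cs : List V, (∀ x ∈ cs, P x) ∧ r ≤ (A cs).card ∧ (A cs).card ≤ 2 * r - 1 := by
  intro L
  induction L with
  | nil => intro _ h; exact ⟨[], by simp, h, by omega⟩
  | cons c L ih =>
    intro hP h
    by_cases hL : r ≤ (A L).card
    · exact ih (fun x hx => hP x (List.mem_cons_of_mem _ hx)) hL
    · refine ⟨c :: L, hP, h, ?_⟩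
      have := hstep c L (hP c (List.mem_cons_self))
      omega

theorem tree_split_aux (k : ℕ) :
    ∀ (V : Type) [Fintype V] [DecidableEq V] (T : SimpleGraph V), T.IsTree →
    ∀ (M : Finset V) (r : ℕ), 0 < r → (k + 1) * (2 * r) ≤ M.card →
    ∃ T' : Fin (k + 1) → T.Subgraph, ∃ Ms : Fin (k + 1) → Finset V,
      (∀ i, (T' i).Connected) ∧
      (∀ i j, i ≠ j → Disjoint (T' i).edgeSet (T' j).edgeSet) ∧
      (∀ i, Ms i ⊆ M) ∧ (∀ i, ∀ v ∈ Ms i, v ∈ (T' i).verts) ∧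
      (∀ i j, i ≠ j → Disjoint (Ms i : Set V) (Ms j)) ∧
      (∀ i, r ≤ (Ms i).card) := by
  induction k with
  | zero =>
    intro V _ _ T hT M r hr hM
    have hrM : r ≤ M.card := by
      have : (0 + 1) * (2 * r) = 2 * r := by ring
      omega
    obtain ⟨A, hAM, hAcard⟩ := Finset.exists_subset_card_eq hrM
    refine ⟨fun _ => ⊤, fun _ => A, ?_, ?_, fun _ => hAM, ?_, ?_, fun _ => hAcard.ge⟩
    · intro i
      rw [Subgraph.connected_iff']
      exact Connected.map Subgraph.topIso.symm.toHom
        Subgraph.topIso.symm.toEquiv.surjective hT.isConnected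
    · intro i j hij; exact absurd (Fin.ext (by have := i.2; have := j.2; omega)) hij
    · intro i v _; simp
    · intro i j hij; exact absurd (Fin.ext (by have := i.2; have := j.2; omega)) hij
  | succ k ih =>
    intro V _ _ T hT M r hr hM
    classical
    have hc := hT.isConnected
    obtain ⟨ρ⟩ := hc.nonempty
    -- pick a deepest vertex v whose below-set contains at least r marked vertices
    have hρin : r ≤ (M.filter (· ∈ below T ρ ρ)).card := by
      have : M.filter (· ∈ below T ρ ρ) = M := by
        apply Finset.filter_true_of_mem
        intro m _; exact below_root hc ρ m
      rw [this]
      calc r ≤ 2 * r := by omega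
        _ ≤ (k + 1 + 1) * (2 * r) := Nat.le_mul_of_pos_left _ (by omega)
        _ ≤ M.card := hM
    obtain ⟨v, hvD, hvmax⟩ := Finset.exists_max_image
      (Finset.univ.filter fun u => r ≤ (M.filter (· ∈ below T ρ u)).card)
      (fun u => T.dist ρ u) ⟨ρ, by simpa using hρin⟩
    rw [Finset.mem_filter] at hvD
    have hvD := hvD.2
    have hchild_small : ∀ c, T.Adj v c → T.dist ρ c = T.dist ρ v + 1 →
        (M.filter (· ∈ below T ρ c)).card + 1 ≤ r := by
      intro c hadj hd
      by_contra hcon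
      have hcD : c ∈ Finset.univ.filter fun u => r ≤ (M.filter (· ∈ below T ρ u)).card := by
        rw [Finset.mem_filter]; exact ⟨Finset.mem_univ _, by omega⟩
      have := hvmax c hcD
      omega
    -- greedy choice of children
    obtain ⟨cs, hcsP, hcard1, hcard2⟩ := greedy_list
      (P := fun c => T.Adj v c ∧ T.dist ρ c = T.dist ρ v + 1)
      (A := fun cs => M.filter fun m => m = v ∨ ∃ c ∈ cs, m ∈ below T ρ c) r hr
      (by
        apply Finset.card_le_one.mpr
        intro a ha b hb
        rw [Finset.mem_filter] at ha hb
        rcases ha.2 with rfl | ⟨c, hcmem, _⟩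
        · rcases hb.2 with rfl | ⟨c, hcmem, _⟩
          · rfl
          · simp at hcmem
        · simp at hcmem)
      (by
        intro c cs hPc
        show (M.filter fun m => m = v ∨ ∃ c' ∈ c :: cs, m ∈ below T ρ c').card ≤
          (M.filter fun m => m = v ∨ ∃ c' ∈ cs, m ∈ below T ρ c').card + (r - 1)
        have hsub : (M.filter fun m => m = v ∨ ∃ c' ∈ c :: cs, m ∈ below T ρ c') ⊆
            (M.filter fun m => m = v ∨ ∃ c' ∈ cs, m ∈ below T ρ c') ∪
              M.filter (· ∈ below T ρ c) := by
          intro m hm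
          rw [Finset.mem_filter] at hm
          rcases hm.2 with rfl | ⟨c', hc', hb⟩
          · exact Finset.mem_union_left _ (Finset.mem_filter.mpr ⟨hm.1, Or.inl rfl⟩)
          · rcases List.mem_cons.mp hc' with rfl | hc''
            · exact Finset.mem_union_right _ (Finset.mem_filter.mpr ⟨hm.1, hb⟩)
            · exact Finset.mem_union_left _
                (Finset.mem_filter.mpr ⟨hm.1, Or.inr ⟨c', hc'', hb⟩⟩)
        have h1 := Finset.card_le_card hsub
        have h2 := Finset.card_union_le
          (M.filter fun m => m = v ∨ ∃ c' ∈ cs, m ∈ below T ρ c')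
          (M.filter (· ∈ below T ρ c))
        have h3 := hchild_small c hPc.1 hPc.2
        omega)
      (Finset.univ.filter fun c => T.Adj v c ∧ T.dist ρ c = T.dist ρ v + 1).toList
      (by
        intro x hx
        rw [Finset.mem_toList, Finset.mem_filter] at hx
        exact hx.2)
      (by
        refine le_trans hvD (Finset.card_le_card ?_)
        intro m hm
        rw [Finset.mem_filter] at hm ⊢
        refine ⟨hm.1, ?_⟩
        rcases eq_or_ne m v with rfl | hne
        · exact Or.inl rfl
        · obtain ⟨c, hadj, hd, hb, _⟩ := below_child_exists hc hm.2 hne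
          exact Or.inr ⟨c, by
            rw [Finset.mem_toList, Finset.mem_filter]
            exact ⟨Finset.mem_univ _, hadj, hd⟩, hb⟩)
    -- names for the pieces
    set Afin : Finset V := M.filter fun m => m = v ∨ ∃ c ∈ cs, m ∈ below T ρ c with hAfin
    have hAsubM : Afin ⊆ M := Finset.filter_subset _ _
    set S : Set V := insert v {x | ∃ c ∈ cs, x ∈ below T ρ c} with hS
    set R : Set V := {x : V | ¬ ∃ c ∈ cs, x ∈ below T ρ c} with hR
    -- the subgraph H
    set H : T.Subgraph := (⊤ : T.Subgraph).induce S with hH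
    have hHconn : H.Connected := by
      rw [hH, ← connected_induce_iff]
      apply induce_connected_of_step T v S (Set.mem_insert _ _)
      intro w hw hwv
      rw [hS, Set.mem_insert_iff] at hw
      rcases hw with rfl | ⟨c, hccs, hwc⟩
      · exact absurd rfl hwv
      · obtain ⟨hadj, hd⟩ := hcsP c hccs
        by_cases hwc' : w = c
        · subst hwc'
          refine ⟨v, Set.mem_insert _ _, hadj, ?_⟩
          rw [SimpleGraph.dist_self]
          exact hc.pos_dist_of_ne (Ne.symm hwv)
        · obtain ⟨u, huw, hub, hud⟩ := below_descend hc hwc hwc'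
          refine ⟨u, Set.mem_insert_iff.mpr (Or.inr ⟨c, hccs, hub⟩), huw, ?_⟩
          have d1 := below_child_dist hc hadj hd hub
          have d2 := below_child_dist hc hadj hd hwc
          omega
    -- remainder set R
    have hρR : ρ ∈ R := by
      rintro ⟨c, hccs, hb⟩
      have hbel : T.dist ρ ρ = T.dist ρ c + T.dist c ρ := hb
      have hd := (hcsP c hccs).2
      rw [SimpleGraph.dist_self] at hbel
      omega
    have hRconn : (T.induce R).Connected := by
      apply induce_connected_of_step T ρ R hρR
      intro w hw hwρ
      obtain ⟨u, huw, hud⟩ := exists_adj_dist hc (a := ρ) (b := w) hwρ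
      refine ⟨u, ?_, huw, by omega⟩
      rintro ⟨c, hccs, hub⟩
      exact hw ⟨c, hccs, below_up hc huw hud hub⟩
    -- inclusion hom
    let ι : T.induce R →g T := ⟨Subtype.val, fun {a b} h => h⟩
    have hιinj : Function.Injective ι := Subtype.val_injective
    have hRtree : (T.induce R).IsTree := by
      refine ⟨hRconn, ?_⟩
      intro x p hp
      exact hT.IsAcyclic (p.map ι)
        ((SimpleGraph.Walk.map_isCycle_iff_of_injective hιinj).mpr hp)
    -- marked vertices for recursion
    have hMsubR : ∀ m ∈ M \ Afin, m ∈ R := by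
      intro m hm
      rw [Finset.mem_sdiff] at hm
      rintro ⟨c, hccs, hb⟩
      exact hm.2 (Finset.mem_filter.mpr ⟨hm.1, Or.inr ⟨c, hccs, hb⟩⟩)
    haveI : Fintype ↥R := Fintype.ofFinite _
    set Msub : Finset ↥R := (M \ Afin).subtype (· ∈ R) with hMsub
    have hMsubcard : (k + 1) * (2 * r) ≤ Msub.card := by
      have h1 : Msub.card = (M \ Afin).card := by
        rw [hMsub, Finset.card_subtype, Finset.filter_true_of_mem hMsubR]
      have h2 : (M \ Afin).card = M.card - Afin.card := Finset.card_sdiff_of_subset hAsubM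
      have h3 : Afin.card ≤ 2 * r - 1 := hcard2
      obtain ⟨p, hp⟩ : ∃ p, (k + 1) * (2 * r) = p := ⟨_, rfl⟩
      have h4 : (k + 1 + 1) * (2 * r) = p + 2 * r := by rw [← hp]; ring
      have h5 := hM
      rw [hp]
      omega
    obtain ⟨T'', Ms'', hconn'', hdisj'', hMsub'', hverts'', hMsdisj'', hcard''⟩ :=
      ih ↥R (T.induce R) hRtree Msub r hr hMsubcard
    -- facts about the pieces
    have hAfinS : ∀ m ∈ Afin, m ∈ S := by
      intro m hm
      rw [hAfin, Finset.mem_filter] at hm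
      rcases hm.2 with rfl | ⟨c, hccs, hb⟩
      · exact Set.mem_insert _ _
      · exact Set.mem_insert_iff.mpr (Or.inr ⟨c, hccs, hb⟩)
    have hedgeH : ∀ a b : V, H.Adj a b →
        (∃ c ∈ cs, a ∈ below T ρ c) ∨ (∃ c ∈ cs, b ∈ below T ρ c) := by
      intro a b hab
      rw [hH, Subgraph.induce_adj] at hab
      obtain ⟨ha, hb, hTab⟩ := hab
      have hne : a ≠ b := hTab.ne
      rw [hS, Set.mem_insert_iff] at ha hb
      rcases ha with rfl | hWa
      · rcases hb with rfl | hWb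
        · exact absurd rfl hne
        · exact Or.inr hWb
      · exact Or.inl hWa
    have hmapadj : ∀ (i0 : Fin (k + 1)) (a b : V), ((T'' i0).map ι).Adj a b →
        ∃ a' b', (T'' i0).Adj a' b' ∧ ι a' = a ∧ ι b' = b := fun _ _ _ h => h
    have hmapR : ∀ (i0 : Fin (k + 1)) (a b : V), ((T'' i0).map ι).Adj a b →
        a ∈ R ∧ b ∈ R := by
      intro i0 a b h
      obtain ⟨a', b', _, ha, hb⟩ := hmapadj i0 a b h
      exact ⟨ha ▸ a'.2, hb ▸ b'.2⟩
    have hMainDisj : ∀ (i0 : Fin (k + 1)) (e : Sym2 V),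
        e ∈ H.edgeSet → e ∈ ((T'' i0).map ι).edgeSet → False := by
      intro i0 e
      induction e with
      | _ a b =>
        intro he1 he2
        rw [Subgraph.mem_edgeSet] at he1 he2
        have h1 := hedgeH a b he1
        have h2 := hmapR i0 a b he2
        rcases h1 with h1 | h1
        · exact h2.1 h1
        · exact h2.2 h1
    -- assemble
    refine ⟨Fin.cons H (fun i => (T'' i).map ι),
      Fin.cons Afin (fun i => (Ms'' i).map ⟨Subtype.val, Subtype.val_injective⟩),
      ?_, ?_, ?_, ?_, ?_, ?_⟩
    · intro i
      rcases Fin.eq_zero_or_eq_succ i with rfl | ⟨i', rfl⟩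
      · simpa using hHconn
      · simp only [Fin.cons_succ]
        exact subgraph_map_connected ι (hconn'' i')
    · intro i j hij
      rcases Fin.eq_zero_or_eq_succ i with rfl | ⟨i', rfl⟩ <;>
        rcases Fin.eq_zero_or_eq_succ j with rfl | ⟨j', rfl⟩
      · exact absurd rfl hij
      · simp only [Fin.cons_zero, Fin.cons_succ]
        exact Set.disjoint_left.mpr fun e he1 he2 => hMainDisj j' e he1 he2
      · simp only [Fin.cons_zero, Fin.cons_succ]
        exact Set.disjoint_right.mpr fun e he1 he2 => hMainDisj i' e he1 he2
      · simp only [Fin.cons_succ]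
        have hne : i' ≠ j' := fun h => hij (by rw [h])
        refine Set.disjoint_left.mpr ?_
        intro e he1 he2
        induction e with
        | _ a b =>
          rw [Subgraph.mem_edgeSet] at he1 he2
          obtain ⟨a1, b1, had1, ha1, hb1⟩ := hmapadj i' a b he1
          obtain ⟨a2, b2, had2, ha2, hb2⟩ := hmapadj j' a b he2
          have ea : a2 = a1 := hιinj (by rw [ha1, ha2])
          have eb : b2 = b1 := hιinj (by rw [hb1, hb2])
          subst ea; subst eb
          exact Set.disjoint_left.mp (hdisj'' i' j' hne)
            (Subgraph.mem_edgeSet.mpr had1) (Subgraph.mem_edgeSet.mpr had2)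
    · intro i
      rcases Fin.eq_zero_or_eq_succ i with rfl | ⟨i', rfl⟩
      · simpa using hAsubM
      · simp only [Fin.cons_succ]
        intro m hm
        obtain ⟨m', hm', rfl⟩ := Finset.mem_map.mp hm
        have := hMsub'' i' hm'
        rw [hMsub, Finset.mem_subtype, Finset.mem_sdiff] at this
        exact this.1
    · intro i
      rcases Fin.eq_zero_or_eq_succ i with rfl | ⟨i', rfl⟩
      · simp only [Fin.cons_zero]
        intro m hm
        exact hAfinS m hm
      · simp only [Fin.cons_succ]
        intro m hm
        obtain ⟨m', hm', rfl⟩ := Finset.mem_map.mp hm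
        exact Set.mem_image_of_mem _ (hverts'' i' m' hm')
    · intro i j hij
      have key : ∀ (j0 : Fin (k + 1)) (m : V), m ∈ Afin →
          m ∈ (Ms'' j0).map ⟨Subtype.val, Subtype.val_injective⟩ → False := by
        intro j0 m hm1 hm2
        obtain ⟨m', hm', rfl⟩ := Finset.mem_map.mp hm2
        have := hMsub'' j0 hm'
        rw [hMsub, Finset.mem_subtype, Finset.mem_sdiff] at this
        exact this.2 hm1
      rcases Fin.eq_zero_or_eq_succ i with rfl | ⟨i', rfl⟩ <;>
        rcases Fin.eq_zero_or_eq_succ j with rfl | ⟨j', rfl⟩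
      · exact absurd rfl hij
      · simp only [Fin.cons_zero, Fin.cons_succ]
        exact Set.disjoint_left.mpr fun m hm1 hm2 => key j' m (by simpa using hm1) (by simpa using hm2)
      · simp only [Fin.cons_zero, Fin.cons_succ]
        exact Set.disjoint_right.mpr fun m hm1 hm2 => key i' m (by simpa using hm1) (by simpa using hm2)
      · simp only [Fin.cons_succ]
        have hne : i' ≠ j' := fun h => hij (by rw [h])
        refine Set.disjoint_left.mpr ?_
        intro m hm1 hm2
        simp only [Finset.coe_map, Set.mem_image, Finset.mem_coe] at hm1 hm2
        obtain ⟨m1, hm1', rfl⟩ := hm1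
        obtain ⟨m2, hm2', hm2e⟩ := hm2
        have : m2 = m1 := Subtype.val_injective hm2e
        subst this
        exact Set.disjoint_left.mp (hMsdisj'' i' j' hne) hm1' hm2'
    · intro i
      rcases Fin.eq_zero_or_eq_succ i with rfl | ⟨i', rfl⟩
      · simpa using hcard1
      · simp only [Fin.cons_succ, Finset.card_map]
        exact hcard'' i'


/-- If a tree T has a set M of at least 2kr marked vertices, then T contains k pairwise
edge-disjoint subtrees each containing at least r marked vertices (with each marked
vertex counted for at most one subtree, via the disjoint sets Ms i). -/
theorem stmt3 {V : Type} [Fintype V] [DecidableEq V] (T : SimpleGraph V) (hT : T.IsTree)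
    (M : Finset V) (k r : ℕ) (hk : 0 < k) (hr : 0 < r) (hM : 2 * k * r ≤ M.card) :
    ∃ T' : Fin k → T.Subgraph, ∃ Ms : Fin k → Finset V,
      (∀ i, (T' i).Connected) ∧
      (∀ i j, i ≠ j → Disjoint (T' i).edgeSet (T' j).edgeSet) ∧
      (∀ i, Ms i ⊆ M) ∧ (∀ i, ∀ v ∈ Ms i, v ∈ (T' i).verts) ∧
      (∀ i j, i ≠ j → Disjoint (Ms i : Set V) (Ms j)) ∧
      (∀ i, r ≤ (Ms i).card) := by
  obtain ⟨k', rfl⟩ := Nat.exists_eq_succ_of_ne_zero hk.ne'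
  exact tree_split_aux k' V T hT M r hr (by rw [show (k' + 1) * (2 * r) = 2 * (k' + 1) * r from by ring]; exact hM)
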